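/- arXiv:0807.0519 — 3 statements merged into one kernel-verified Lean document; each statement's English description precedes it below -/
import Mathlib

section
/- The half-1/2-Hölder norm of Kufarev's driving term is exactly 3√2; that is, sup over s ≠ t of |u(t) − u(s)|/|t−s|^{1/2} equals 3√2, where u(t) = 3·arcsin(√(1 − e^{−2t})). -/
open Real Set Filter
open Topology

-- derivative of u
lemma kuf_hasDerivAt {t : ℝ} (ht : 0 < t) :
    HasDerivAt (fun t => 3 * Real.arcsin (Real.sqrt (1 - Real.exp (-2 * t))))
      (3 * Real.exp (-t) / Real.sqrt (1 - Real.exp (-2 * t))) t := by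
  have hlt : Real.exp (-2 * t) < 1 := by
    rw [Real.exp_lt_one_iff]; linarith
  have hpos : 0 < 1 - Real.exp (-2 * t) := by linarith
  have h1 : HasDerivAt (fun t : ℝ => 1 - Real.exp (-2 * t)) (2 * Real.exp (-2 * t)) t := by
    have := (Real.hasDerivAt_exp (-2 * t)).comp t ((hasDerivAt_id t).const_mul (-2))
    exact ((hasDerivAt_const t (1:ℝ)).sub this).congr_deriv (by ring)
  have h2 : HasDerivAt (fun t : ℝ => Real.sqrt (1 - Real.exp (-2 * t)))
      (2 * Real.exp (-2 * t) / (2 * Real.sqrt (1 - Real.exp (-2 * t)))) t :=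
    (Real.hasDerivAt_sqrt hpos.ne').comp t h1 |>.congr_deriv (by ring)
  have hy1 : Real.sqrt (1 - Real.exp (-2 * t)) < 1 := by
    rw [Real.sqrt_lt' one_pos]; nlinarith [Real.exp_pos (-2*t)]
  have hyneg : (-1:ℝ) < Real.sqrt (1 - Real.exp (-2 * t)) := by
    have := Real.sqrt_nonneg (1 - Real.exp (-2 * t)); linarith
  have h3 := (Real.hasDerivAt_arcsin hyneg.ne' hy1.ne).comp t h2
  have hsq : Real.sqrt (1 - Real.exp (-2 * t)) ^ 2 = 1 - Real.exp (-2 * t) :=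
    Real.sq_sqrt hpos.le
  have := h3.const_mul (3:ℝ)
  refine this.congr_deriv (Eq.symm ?_)
  rw [hsq]
  have : (1:ℝ) - (1 - Real.exp (-2*t)) = Real.exp (-2*t) := by ring
  rw [this]
  have hexp : Real.sqrt (Real.exp (-2*t)) = Real.exp (-t) := by
    rw [show (-2*t) = (-t) + (-t) by ring, Real.exp_add, Real.sqrt_mul_self (Real.exp_nonneg _)]
  rw [hexp]
  have hs : Real.sqrt (1 - Real.exp (-2*t)) ≠ 0 := (Real.sqrt_pos.2 hpos).ne'
  have he : Real.exp (-t) ≠ 0 := (Real.exp_pos _).ne'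
  have he2 : Real.exp (-2*t) = Real.exp (-t) * Real.exp (-t) := by
    rw [← Real.exp_add]; ring_nf
  rw [he2] at hs ⊢
  rw [div_eq_iff hs, one_div, mul_comm]
  field_simp
  exact (mul_inv_cancel₀ (by rwa [sq])).symm

lemma kuf_cont : Continuous (fun t => 3 * Real.arcsin (Real.sqrt (1 - Real.exp (-2 * t)))) :=
  continuous_const.mul (Real.continuous_arcsin.comp (Real.continuous_sqrt.comp
    (continuous_const.sub (Real.continuous_exp.comp (continuous_const.mul continuous_id)))))

lemma kuf_mono : MonotoneOn (fun t => 3 * Real.arcsin (Real.sqrt (1 - Real.exp (-2 * t)))) (Ici 0) := by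
  intro a _ b _ hab
  dsimp only
  have : Real.exp (-2 * b) ≤ Real.exp (-2 * a) := Real.exp_le_exp.2 (by linarith)
  have := Real.monotone_arcsin (Real.sqrt_le_sqrt (by linarith :
    1 - Real.exp (-2 * a) ≤ 1 - Real.exp (-2 * b)))
  linarith

lemma kuf_gderiv {x : ℝ} (hx : 0 < x) :
    HasDerivAt (fun x : ℝ => 3 * Real.sqrt 2 * Real.sqrt x
        - 3 * Real.arcsin (Real.sqrt (1 - Real.exp (-2 * x))))
      (3 * Real.sqrt 2 * (1 / (2 * Real.sqrt x))
        - 3 * Real.exp (-x) / Real.sqrt (1 - Real.exp (-2 * x))) x := by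
  have h1 : HasDerivAt (fun x : ℝ => 3 * Real.sqrt 2 * Real.sqrt x)
      (3 * Real.sqrt 2 * (1 / (2 * Real.sqrt x))) x :=
    (Real.hasDerivAt_sqrt hx.ne').const_mul _
  exact h1.sub (kuf_hasDerivAt hx)

lemma kuf_gderiv_nonneg {x : ℝ} (hx : 0 < x) :
    0 ≤ 3 * Real.sqrt 2 * (1 / (2 * Real.sqrt x))
        - 3 * Real.exp (-x) / Real.sqrt (1 - Real.exp (-2 * x)) := by
  have hlt : Real.exp (-2 * x) < 1 := by rw [Real.exp_lt_one_iff]; linarith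
  have hpos : 0 < 1 - Real.exp (-2 * x) := by linarith
  have hsx : 0 < Real.sqrt x := Real.sqrt_pos.2 hx
  have hsX : 0 < Real.sqrt (1 - Real.exp (-2 * x)) := Real.sqrt_pos.2 hpos
  have key : Real.exp (-x) * Real.sqrt x * Real.sqrt 2 ≤ Real.sqrt (1 - Real.exp (-2 * x)) := by
    rw [show Real.exp (-x) * Real.sqrt x * Real.sqrt 2
        = Real.sqrt (Real.exp (-x) ^ 2 * x * 2) by
          rw [Real.sqrt_mul (by positivity), Real.sqrt_mul (by positivity),
            Real.sqrt_sq (Real.exp_nonneg _)]]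
    apply Real.sqrt_le_sqrt
    have h2 : 1 + 2 * x ≤ Real.exp (2 * x) := by
      have := Real.add_one_le_exp (2 * x); linarith
    have hee : Real.exp (-x) ^ 2 * Real.exp (2 * x) = 1 := by
      rw [sq, ← Real.exp_add, ← Real.exp_add, show -x + -x + 2*x = 0 by ring, Real.exp_zero]
    have hm : Real.exp (-2 * x) = Real.exp (-x) ^ 2 := by
      rw [sq, ← Real.exp_add]; ring_nf
    nlinarith [Real.exp_pos (-x), sq_nonneg (Real.exp (-x))]
  rw [sub_nonneg, show 3 * Real.sqrt 2 * (1 / (2 * Real.sqrt x))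
    = 3 * Real.sqrt 2 / (2 * Real.sqrt x) from by ring,
    div_le_div_iff₀ hsX (by positivity)]
  have h22 : Real.sqrt 2 * Real.sqrt 2 = 2 := Real.mul_self_sqrt (by norm_num)
  calc 3 * Real.exp (-x) * (2 * Real.sqrt x)
      = 3 * Real.sqrt 2 * (Real.exp (-x) * Real.sqrt x * Real.sqrt 2) := by
        linear_combination (-3 * Real.exp (-x) * Real.sqrt x) * h22
    _ ≤ 3 * Real.sqrt 2 * Real.sqrt (1 - Real.exp (-2 * x)) := by
        gcongr

lemma kuf_key {s t : ℝ} (hs : 0 ≤ s) (hst : s ≤ t) :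
    3 * Real.arcsin (Real.sqrt (1 - Real.exp (-2 * t)))
      - 3 * Real.arcsin (Real.sqrt (1 - Real.exp (-2 * s)))
      ≤ 3 * Real.sqrt 2 * (Real.sqrt t - Real.sqrt s) := by
  have hmono : MonotoneOn (fun x : ℝ => 3 * Real.sqrt 2 * Real.sqrt x
      - 3 * Real.arcsin (Real.sqrt (1 - Real.exp (-2 * x)))) (Ici (0:ℝ)) := by
    apply monotoneOn_of_deriv_nonneg (convex_Ici 0)
    · exact ((continuous_const.mul Real.continuous_sqrt).sub kuf_cont).continuousOn
    · rw [interior_Ici]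
      intro x hx
      exact (kuf_gderiv hx).differentiableAt.differentiableWithinAt
    · rw [interior_Ici]
      intro x hx
      rw [(kuf_gderiv hx).deriv]
      exact kuf_gderiv_nonneg hx
  have := hmono hs (hs.trans hst) hst
  dsimp only at this
  linarith

lemma sqrt_sub_le' {s t : ℝ} (hs : 0 ≤ s) (hst : s ≤ t) :
    Real.sqrt t - Real.sqrt s ≤ Real.sqrt (t - s) := by
  have h1 : Real.sqrt t ≤ Real.sqrt s + Real.sqrt (t - s) := by
    rw [show Real.sqrt s + Real.sqrt (t - s)
        = Real.sqrt ((Real.sqrt s + Real.sqrt (t - s)) ^ 2) from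
      (Real.sqrt_sq (by positivity)).symm]
    apply Real.sqrt_le_sqrt
    nlinarith [Real.sq_sqrt hs, Real.sq_sqrt (sub_nonneg.2 hst),
      Real.sqrt_nonneg s, Real.sqrt_nonneg (t - s)]
  linarith

lemma kuf_zero : 3 * Real.arcsin (Real.sqrt (1 - Real.exp (-2 * 0))) = 0 := by
  norm_num

lemma kuf_nonneg (t : ℝ) : 0 ≤ 3 * Real.arcsin (Real.sqrt (1 - Real.exp (-2 * t))) := by
  have := Real.arcsin_nonneg.2 (Real.sqrt_nonneg (1 - Real.exp (-2 * t)))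
  linarith

-- upper bound part
lemma kuf_upper {s t : ℝ} (hs : 0 ≤ s) (ht : 0 ≤ t) (hne : s ≠ t) :
    |3 * Real.arcsin (Real.sqrt (1 - Real.exp (-2 * t)))
      - 3 * Real.arcsin (Real.sqrt (1 - Real.exp (-2 * s)))| / |t - s| ^ ((1:ℝ)/2)
      ≤ 3 * Real.sqrt 2 := by
  wlog hst : s < t generalizing s t
  · have h' : t < s := lt_of_le_of_ne (not_lt.1 hst) hne.symm
    rw [abs_sub_comm, abs_sub_comm t s]
    exact this ht hs hne.symm h'
  have hd : 0 < t - s := by linarith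
  rw [abs_of_pos hd, ← Real.sqrt_eq_rpow,
    abs_of_nonneg (by
      have := kuf_mono (mem_Ici.2 hs) (mem_Ici.2 (hs.trans hst.le)) hst.le
      simpa using sub_nonneg.2 this)]
  rw [div_le_iff₀ (Real.sqrt_pos.2 hd)]
  calc 3 * Real.arcsin (Real.sqrt (1 - Real.exp (-2 * t)))
      - 3 * Real.arcsin (Real.sqrt (1 - Real.exp (-2 * s)))
      ≤ 3 * Real.sqrt 2 * (Real.sqrt t - Real.sqrt s) := kuf_key hs hst.le
    _ ≤ 3 * Real.sqrt 2 * Real.sqrt (t - s) :=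
        mul_le_mul_of_nonneg_left (sqrt_sub_le' hs hst.le) (by positivity)

-- the limit
lemma kuf_tendsto :
    Tendsto (fun t : ℝ => (3 * Real.arcsin (Real.sqrt (1 - Real.exp (-2 * t)))) / t ^ ((1:ℝ)/2))
      (𝓝[>] 0) (𝓝 (3 * Real.sqrt 2)) := by
  have hA : Tendsto (fun v : ℝ => Real.arcsin v / v) (𝓝[≠] (0:ℝ)) (𝓝 1) := by
    have h : HasDerivAt Real.arcsin 1 0 := by
      simpa using Real.hasDerivAt_arcsin (by norm_num : (0:ℝ) ≠ -1) (by norm_num : (0:ℝ) ≠ 1)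
    have h2 := hasDerivAt_iff_tendsto_slope.1 h
    refine h2.congr' ?_ |>.mono_left le_rfl
    filter_upwards [self_mem_nhdsWithin] with v hv
    simp [slope_def_field, Real.arcsin_zero]
  have hy : Tendsto (fun t : ℝ => Real.sqrt (1 - Real.exp (-2 * t))) (𝓝[>] (0:ℝ))
      (𝓝[≠] (0:ℝ)) := by
    rw [tendsto_nhdsWithin_iff]
    constructor
    · have hc : Continuous (fun t : ℝ => Real.sqrt (1 - Real.exp (-2 * t))) :=
        Real.continuous_sqrt.comp
          (continuous_const.sub (Real.continuous_exp.comp (continuous_const.mul continuous_id)))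
      have := hc.tendsto 0
      simpa using this.mono_left nhdsWithin_le_nhds
    · filter_upwards [self_mem_nhdsWithin] with t (ht : 0 < t)
      have hlt : Real.exp (-2 * t) < 1 := by rw [Real.exp_lt_one_iff]; linarith
      exact (Real.sqrt_pos.2 (by linarith)).ne'
  have hC : Tendsto (fun t : ℝ =>
      Real.arcsin (Real.sqrt (1 - Real.exp (-2 * t))) / Real.sqrt (1 - Real.exp (-2 * t)))
      (𝓝[>] (0:ℝ)) (𝓝 1) := hA.comp hy
  have hB : Tendsto (fun t : ℝ => (1 - Real.exp (-2 * t)) / t) (𝓝[≠] (0:ℝ)) (𝓝 2) := by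
    have hexp : HasDerivAt (fun t : ℝ => Real.exp (-2 * t)) (-2) 0 := by
      simpa using ((hasDerivAt_id (0:ℝ)).const_mul (-2)).exp
    have h : HasDerivAt (fun t : ℝ => 1 - Real.exp (-2 * t)) 2 0 := by
      simpa using hexp.const_sub 1
    have h2 := hasDerivAt_iff_tendsto_slope.1 h
    refine h2.congr' ?_
    filter_upwards [self_mem_nhdsWithin] with v hv
    simp [slope_def_field]
  have hD : Tendsto (fun t : ℝ => Real.sqrt (1 - Real.exp (-2 * t)) / Real.sqrt t)
      (𝓝[>] (0:ℝ)) (𝓝 (Real.sqrt 2)) := by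
    have := (hB.mono_left (nhdsWithin_mono 0 (fun x (hx : 0 < x) => hx.ne'))).sqrt
    refine this.congr' ?_
    filter_upwards [self_mem_nhdsWithin] with t (ht : 0 < t)
    rw [Real.sqrt_div (by
      have hlt : Real.exp (-2 * t) ≤ 1 := by
        rw [Real.exp_le_one_iff]; linarith
      linarith)]
  have := (hC.const_mul 3).mul hD
  rw [mul_one] at this
  refine this.congr' ?_
  filter_upwards [self_mem_nhdsWithin] with t (ht : 0 < t)
  have hlt : Real.exp (-2 * t) < 1 := by rw [Real.exp_lt_one_iff]; linarith
  have hy0 : Real.sqrt (1 - Real.exp (-2 * t)) ≠ 0 := (Real.sqrt_pos.2 (by linarith)).ne'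
  have hst0 : Real.sqrt t ≠ 0 := (Real.sqrt_pos.2 ht).ne'
  rw [← Real.sqrt_eq_rpow]
  set Y := Real.sqrt (1 - Real.exp (-2 * t)) with hY
  set A := Real.arcsin Y with hA2
  set S := Real.sqrt t with hS
  field_simp


/-- The `1/2`-Hölder norm of Kufarev's driving term `u(t) = 3 arcsin (√(1 - e^{-2t}))`
is exactly `3√2`: the supremum of `|u t - u s| / |t - s|^{1/2}` over `s ≠ t`, `s, t ≥ 0`,
equals `3√2`. -/
theorem kufarev_driving_term_holder_norm :
    let u : ℝ → ℝ := fun t => 3 * Real.arcsin (Real.sqrt (1 - Real.exp (-2 * t)))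
    IsLUB {x : ℝ | ∃ s t : ℝ, 0 ≤ s ∧ 0 ≤ t ∧ s ≠ t ∧
        x = |u t - u s| / |t - s| ^ ((1:ℝ)/2)}
      (3 * Real.sqrt 2) := by
  intro u
  constructor
  · rintro x ⟨s, t, hs, ht, hne, rfl⟩
    exact kuf_upper hs ht hne
  · intro b hb
    have hev : ∀ᶠ t in 𝓝[>] (0:ℝ),
        (3 * Real.arcsin (Real.sqrt (1 - Real.exp (-2 * t)))) / t ^ ((1:ℝ)/2) ≤ b := by
      filter_upwards [self_mem_nhdsWithin] with t (ht : 0 < t)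
      apply hb
      refine ⟨0, t, le_refl 0, ht.le, ne_of_lt ht, ?_⟩
      show _ = |u t - u 0| / |t - 0| ^ ((1:ℝ)/2)
      have hu0 : u 0 = 0 := kuf_zero
      rw [hu0, sub_zero, sub_zero, abs_of_nonneg (kuf_nonneg t), abs_of_pos ht]
    exact le_of_tendsto kuf_tendsto hev
end

section
/- Let c ≥ 0 and let φ : (0,δ₀) → ℝ be continuously differentiable satisfying t·φ'(t) = 2√t/(√t·φ(t) − λ(t)) − φ(t)/2, where λ : (0,δ₀) → ℝ is continuous with λ(t) < √t·φ(t) for all t and lim_{t→0+} λ(t)/√t = c. Then for every ε > 0 there exists δ > 0 such that φ(t) ≤ (c + ε + √((c+ε)² + 16))/2 for all t ∈ (0, δ), provided lim_{t→0+} φ(t) exists. -/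
open Real Set Filter

/-- Barrier estimate for `φ(t) = h⁺(0,t)/√t`. If `φ` solves
`t φ'(t) = 2√t/(√t φ(t) - λ(t)) - φ(t)/2` on `(0,δ₀)`, where `λ` is continuous with
`λ(t) < √t φ(t)` and `λ(t)/√t → c ≥ 0` as `t → 0+`, and `φ` has a limit at `0+`, then
for every `ε > 0` there is `δ > 0` with `φ(t) ≤ (c+ε+√((c+ε)²+16))/2` on `(0,δ)`. -/
theorem loewner_phi_barrier (c δ₀ : ℝ) (hc : 0 ≤ c) (hδ₀ : 0 < δ₀)
    (φ φ' lam : ℝ → ℝ)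
    (hφ : ∀ t ∈ Set.Ioo 0 δ₀, HasDerivAt φ (φ' t) t)
    (hφ'cont : ContinuousOn φ' (Set.Ioo 0 δ₀))
    (hode : ∀ t ∈ Set.Ioo 0 δ₀,
      t * φ' t = 2 * Real.sqrt t / (Real.sqrt t * φ t - lam t) - φ t / 2)
    (hlam_cont : ContinuousOn lam (Set.Ioo 0 δ₀))
    (hlam_lt : ∀ t ∈ Set.Ioo 0 δ₀, lam t < Real.sqrt t * φ t)
    (hlam_lim : Tendsto (fun t => lam t / Real.sqrt t) (nhdsWithin 0 (Set.Ioi 0)) (nhds c))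
    (hφ_lim : ∃ L : ℝ, Tendsto φ (nhdsWithin 0 (Set.Ioi 0)) (nhds L)) :
    ∀ ε > 0, ∃ δ > 0, ∀ t ∈ Set.Ioo 0 δ,
      φ t ≤ (c + ε + Real.sqrt ((c + ε) ^ 2 + 16)) / 2 := by
  obtain ⟨L, hL⟩ := hφ_lim
  obtain ⟨s0, hs0def⟩ : ∃ s0 : ℝ, s0 = Real.sqrt (c ^ 2 + 16) := ⟨_, rfl⟩
  have hs0sq : s0 ^ 2 = c ^ 2 + 16 := by rw [hs0def]; exact Real.sq_sqrt (by positivity)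
  have hs0nn : 0 ≤ s0 := hs0def ▸ Real.sqrt_nonneg _
  have hs0c : c < s0 := by nlinarith
  have hmemδ₀ : ∀ᶠ t in nhdsWithin (0:ℝ) (Set.Ioi 0), t ∈ Set.Ioo (0:ℝ) δ₀ := by
    rw [eventually_iff, mem_nhdsGT_iff_exists_Ioo_subset]
    exact ⟨δ₀, hδ₀, fun x hx => hx⟩
  -- Key claim : L ≤ (c + s0)/2
  have key : L ≤ (c + s0) / 2 := by
    by_contra hLgt
    push_neg at hLgt
    have hLc : c < L := by linarith
    have hquad : 4 < L * (L - c) := by nlinarith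
    obtain ⟨R, hRdef⟩ : ∃ R : ℝ, R = 2 / (L - c) - L / 2 := ⟨_, rfl⟩
    have hR : R < 0 := by
      have h1 : 2 / (L - c) < L / 2 := by
        rw [div_lt_div_iff₀ (by linarith) two_pos]; nlinarith
      rw [hRdef]; linarith
    -- t * φ' t tends to R along 0+
    have hden : Tendsto (fun t => φ t - lam t / Real.sqrt t)
        (nhdsWithin (0:ℝ) (Set.Ioi 0)) (nhds (L - c)) := hL.sub hlam_lim
    have htend0 : Tendsto (fun t => 2 / (φ t - lam t / Real.sqrt t) - φ t / 2)
        (nhdsWithin (0:ℝ) (Set.Ioi 0)) (nhds R) := by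
      rw [hRdef]
      exact (tendsto_const_nhds.div hden (by linarith)).sub (hL.div_const 2)
    have heq : (fun t => 2 / (φ t - lam t / Real.sqrt t) - φ t / 2)
        =ᶠ[nhdsWithin (0:ℝ) (Set.Ioi 0)] (fun t => t * φ' t) := by
      filter_upwards [hmemδ₀] with t ht
      have hst : (0:ℝ) < Real.sqrt t := Real.sqrt_pos.mpr ht.1
      have hfact : Real.sqrt t * φ t - lam t
          = Real.sqrt t * (φ t - lam t / Real.sqrt t) := by
        field_simp
      rw [hode t ht, hfact]
      rw [mul_comm 2 (Real.sqrt t), mul_div_mul_left _ _ hst.ne']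
    have htend : Tendsto (fun t => t * φ' t)
        (nhdsWithin (0:ℝ) (Set.Ioi 0)) (nhds R) := htend0.congr' heq
    have hlt : ∀ᶠ t in nhdsWithin (0:ℝ) (Set.Ioi 0), t * φ' t < R / 2 :=
      htend.eventually_lt_const (by linarith)
    obtain ⟨δ₁, hδ₁, hsub⟩ :=
      mem_nhdsGT_iff_exists_Ioo_subset.mp (eventually_iff.mp (hlt.and hmemδ₀))
    have hδ₁pos : (0:ℝ) < δ₁ := hδ₁
    -- g is antitone on (0, δ₁)
    obtain ⟨g, hgdef⟩ : ∃ g : ℝ → ℝ, g = fun t => φ t - R / 2 * Real.log t := ⟨_, rfl⟩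
    have hgd : ∀ x ∈ Set.Ioo (0:ℝ) δ₁, HasDerivAt g (φ' x - R / 2 * x⁻¹) x := by
      intro x hx
      rw [hgdef]
      exact (hφ x (hsub hx).2).sub ((Real.hasDerivAt_log hx.1.ne').const_mul (R / 2))
    have hanti : AntitoneOn g (Set.Ioo 0 δ₁) := by
      apply antitoneOn_of_deriv_nonpos (convex_Ioo 0 δ₁)
      · intro x hx
        exact ((hgd x hx).continuousAt).continuousWithinAt
      · intro x hx
        rw [interior_Ioo] at hx
        exact ((hgd x hx).differentiableAt).differentiableWithinAt
      · intro x hx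
        rw [interior_Ioo] at hx
        have hxpos : (0:ℝ) < x := hx.1
        rw [(hgd x hx).deriv, sub_nonpos]
        have h1 : x * φ' x < R / 2 := (hsub hx).1
        have h2 : x * x⁻¹ = 1 := mul_inv_cancel₀ hxpos.ne'
        nlinarith [mul_pos (sub_pos.mpr h1) (inv_pos.mpr hxpos)]
    obtain ⟨t₀, ht₀def⟩ : ∃ t₀ : ℝ, t₀ = δ₁ / 2 := ⟨_, rfl⟩
    have ht₀mem : t₀ ∈ Set.Ioo (0:ℝ) δ₁ := ⟨by rw [ht₀def]; linarith, by rw [ht₀def]; linarith⟩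
    -- eventually φ s is large : contradiction with φ s → L
    have hlog : Tendsto (fun s => R / 2 * Real.log s)
        (nhdsWithin (0:ℝ) (Set.Ioi 0)) atTop :=
      Real.tendsto_log_nhdsGT_zero.const_mul_atBot_of_neg (by linarith)
    have hev1 : ∀ᶠ s in nhdsWithin (0:ℝ) (Set.Ioi 0), φ s < L + 1 :=
      hL.eventually_lt_const (by linarith)
    have hev2 : ∀ᶠ s in nhdsWithin (0:ℝ) (Set.Ioi 0),
        L + 1 - g t₀ ≤ R / 2 * Real.log s := hlog.eventually (eventually_ge_atTop _)
    have hev3 : ∀ᶠ s in nhdsWithin (0:ℝ) (Set.Ioi 0), s ∈ Set.Ioo (0:ℝ) t₀ := by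
      rw [eventually_iff, mem_nhdsGT_iff_exists_Ioo_subset]
      exact ⟨t₀, ht₀mem.1, fun x hx => hx⟩
    obtain ⟨s, hs1, hs2, hs3⟩ := ((hev1.and hev2).and hev3).exists
    have hsmem : s ∈ Set.Ioo (0:ℝ) δ₁ := ⟨hs2, lt_trans hs3 ht₀mem.2⟩
    have hgle : g t₀ ≤ g s := hanti hsmem ht₀mem (le_of_lt hs3)
    have hgs : φ s = g s + R / 2 * Real.log s := by rw [hgdef]; ring
    linarith [hs1.1, hs1.2, hgle]
  -- main conclusion
  intro ε hε
  obtain ⟨sε, hsεdef⟩ : ∃ sε : ℝ, sε = Real.sqrt ((c + ε) ^ 2 + 16) := ⟨_, rfl⟩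
  have hsεge : s0 ≤ sε := by
    rw [hsεdef, hs0def]
    exact Real.sqrt_le_sqrt (by nlinarith)
  have hLB : L < (c + ε + sε) / 2 := by linarith
  have hev : ∀ᶠ t in nhdsWithin (0:ℝ) (Set.Ioi 0),
      φ t < (c + ε + sε) / 2 := hL.eventually_lt_const hLB
  obtain ⟨δ, hδ, hsub⟩ := mem_nhdsGT_iff_exists_Ioo_subset.mp (eventually_iff.mp hev)
  refine ⟨δ, hδ, fun t ht => ?_⟩
  have := hsub ht
  rw [Set.mem_setOf_eq, hsεdef] at this
  exact le_of_lt this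
end

section
/- Let a₂ : (0,δ) → ℂ be a nonvanishing differentiable function satisfying a₂'(t)/a₂(t) = −2/(t·((b−c) + o(1))²) as t → 0+, where b > c are real constants. Then for every ε > 0, lim_{t→0+} a₂(t)·t^{2/(b−c)² + ε} = 0 and lim_{t→0+} |a₂(t)|·t^{2/(b−c)² − ε} = ∞. -/
open Real Set Filter

lemma hasDerivAt_log_norm (f : ℝ → ℂ) (f' : ℂ) (t : ℝ) (h0 : f t ≠ 0)
    (hf : HasDerivAt f f' t) :
    HasDerivAt (fun s => Real.log ‖f s‖) ((f' / f t).re) t := by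
  have hre : HasDerivAt (fun s => (f s).re) f'.re t :=
    Complex.reCLM.hasFDerivAt.comp_hasDerivAt t hf
  have him : HasDerivAt (fun s => (f s).im) f'.im t :=
    Complex.imCLM.hasFDerivAt.comp_hasDerivAt t hf
  have hsq : HasDerivAt (fun s => Complex.normSq (f s))
      (2 * ((f t).re * f'.re + (f t).im * f'.im)) t := by
    have h := (hre.mul hre).add (him.mul him)
    simp only [Complex.normSq_apply]
    refine h.congr_deriv ?_
    ring
  have hns : Complex.normSq (f t) ≠ 0 := by
    simpa [Complex.normSq_eq_zero] using h0
  have hlog := (Real.hasDerivAt_log hns).comp t hsq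
  have heq : (fun s => Real.log ‖f s‖) = fun s => Real.log (Complex.normSq (f s)) / 2 := by
    funext s
    rw [Complex.norm_def, Real.log_sqrt (Complex.normSq_nonneg _)]
  rw [heq]
  have := hlog.div_const 2
  refine this.congr_deriv ?_
  rw [Complex.div_re]
  have : Complex.normSq (f t) ≠ 0 := hns
  field_simp

lemma mono_aux (F F' : ℝ → ℝ) (δ t₀ : ℝ) (ht₀ : t₀ ∈ Set.Ioo 0 δ)
    (hd : ∀ t ∈ Set.Ioo 0 δ, HasDerivAt F (F' t) t)
    (hpos : ∀ t ∈ Set.Ioo 0 t₀, 0 ≤ F' t) :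
    ∀ t ∈ Set.Ioc 0 t₀, F t ≤ F t₀ := by
  have hmono : MonotoneOn F (Set.Ioc 0 t₀) := by
    apply monotoneOn_of_deriv_nonneg (convex_Ioc 0 t₀)
    · intro x hx
      exact (hd x ⟨hx.1, lt_of_le_of_lt hx.2 ht₀.2⟩).continuousAt.continuousWithinAt
    · intro x hx
      rw [interior_Ioc] at hx
      exact (hd x ⟨hx.1, hx.2.trans ht₀.2⟩).differentiableAt.differentiableWithinAt
    · intro x hx
      rw [interior_Ioc] at hx
      rw [(hd x ⟨hx.1, hx.2.trans ht₀.2⟩).deriv]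
      exact hpos x hx
  intro t ht
  exact hmono ht ⟨ht₀.1, le_refl t₀⟩ ht.2


/-- Growth of the coefficient `a₂(t)`. Suppose `a₂ : (0,δ) → ℂ` is nonvanishing and
differentiable with `a₂'(t)/a₂(t) = -2/(t ψ(t)²)` where `ψ(t) → b - c > 0` as `t → 0+`.
Then for every `ε > 0`, `a₂(t) t^{2/(b-c)²+ε} → 0` and `|a₂(t)| t^{2/(b-c)²-ε} → ∞`. -/
theorem loewner_a2_growth (b c δ : ℝ) (hbc : c < b) (hδ : 0 < δ)
    (a₂ a₂' : ℝ → ℂ) (ψ : ℝ → ℝ)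
    (hne : ∀ t ∈ Set.Ioo 0 δ, a₂ t ≠ 0)
    (hderiv : ∀ t ∈ Set.Ioo 0 δ, HasDerivAt a₂ (a₂' t) t)
    (hode : ∀ t ∈ Set.Ioo 0 δ, a₂' t / a₂ t = -2 / (t * (ψ t) ^ 2))
    (hψ : Tendsto ψ (nhdsWithin 0 (Set.Ioi 0)) (nhds (b - c))) :
    ∀ ε > 0,
      Tendsto (fun t => a₂ t * ((t ^ (2 / (b - c) ^ 2 + ε) : ℝ) : ℂ))
        (nhdsWithin 0 (Set.Ioi 0)) (nhds 0) ∧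
      Tendsto (fun t => ‖a₂ t‖ * t ^ (2 / (b - c) ^ 2 - ε))
        (nhdsWithin 0 (Set.Ioi 0)) atTop := by
  intro ε hε
  have hK : (0:ℝ) < b - c := sub_pos.mpr hbc
  set α : ℝ := 2 / (b - c) ^ 2 with hαdef
  have hαpos : 0 < α := by positivity
  -- derivative of log ‖a₂‖
  have hL : ∀ t ∈ Set.Ioo (0:ℝ) δ,
      HasDerivAt (fun s => Real.log ‖a₂ s‖) (-2 / (t * ψ t ^ 2)) t := by
    intro t ht
    have h1 := hasDerivAt_log_norm a₂ (a₂' t) t (hne t ht) (hderiv t ht)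
    have h2 : (a₂' t / a₂ t).re = -2 / (t * ψ t ^ 2) := by
      rw [hode t ht]
      have h3 : ((-2 : ℂ) / ((t:ℂ) * (ψ t:ℂ) ^ 2)) = ((-2 / (t * ψ t ^ 2) : ℝ) : ℂ) := by
        push_cast; ring
      rw [h3, Complex.ofReal_re]
    rwa [h2] at h1
  -- eventual bound on 2/ψ²
  have h2ψ : Tendsto (fun t => 2 / ψ t ^ 2) (nhdsWithin 0 (Set.Ioi 0)) (nhds α) := by
    rw [hαdef]
    exact tendsto_const_nhds.div (hψ.pow 2) (by positivity)
  have hEv : ∀ᶠ t in nhdsWithin 0 (Set.Ioi 0), |2 / ψ t ^ 2 - α| < ε / 2 := by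
    have := Metric.tendsto_nhds.mp h2ψ (ε / 2) (by linarith)
    simpa [Real.dist_eq] using this
  have hIoo : Set.Ioo (0:ℝ) δ ∈ nhdsWithin 0 (Set.Ioi 0) :=
    Ioo_mem_nhdsGT_of_mem ⟨le_refl 0, hδ⟩
  have hmem : {t : ℝ | |2 / ψ t ^ 2 - α| < ε / 2} ∩ Set.Ioo 0 δ ∈
      nhdsWithin 0 (Set.Ioi 0) := Filter.inter_mem hEv hIoo
  obtain ⟨u, hu, hsub⟩ := mem_nhdsGT_iff_exists_Ioo_subset.mp hmem
  rw [Set.mem_Ioi] at hu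
  set t₀ : ℝ := u / 2 with ht₀def
  have ht₀u : t₀ ∈ Set.Ioo (0:ℝ) u := ⟨by positivity, half_lt_self hu⟩
  have ht₀mem := hsub ht₀u
  have ht₀δ : t₀ ∈ Set.Ioo (0:ℝ) δ := ht₀mem.2
  have hsubset : ∀ t ∈ Set.Ioo (0:ℝ) t₀,
      |2 / ψ t ^ 2 - α| < ε / 2 ∧ t ∈ Set.Ioo (0:ℝ) δ := by
    intro t ht
    exact hsub ⟨ht.1, ht.2.trans (half_lt_self hu)⟩
  -- rewrite of the ODE rhs
  have hsplit : ∀ t : ℝ, -2 / (t * ψ t ^ 2) = -(2 / ψ t ^ 2) * t⁻¹ := by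
    intro t
    rw [div_mul_eq_div_div_swap, div_eq_mul_inv, neg_div, div_eq_mul_inv]
  constructor
  · -- first limit
    set g : ℝ → ℝ := fun s => Real.log ‖a₂ s‖ + (α + ε / 2) * Real.log s with hgdef
    have hg : ∀ t ∈ Set.Ioo (0:ℝ) δ,
        HasDerivAt g (-2 / (t * ψ t ^ 2) + (α + ε / 2) * t⁻¹) t := by
      intro t ht
      exact (hL t ht).add ((Real.hasDerivAt_log (ne_of_gt ht.1)).const_mul (α + ε / 2))
    have hgpos : ∀ t ∈ Set.Ioo (0:ℝ) t₀, 0 ≤ -2 / (t * ψ t ^ 2) + (α + ε / 2) * t⁻¹ := by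
      intro t ht
      obtain ⟨habs, htδ⟩ := hsubset t ht
      have h1 := abs_lt.mp habs
      have h2 : 0 ≤ (α + ε / 2 - 2 / ψ t ^ 2) := by linarith [h1.2]
      have h3 : 0 ≤ t⁻¹ := inv_nonneg.mpr ht.1.le
      have := mul_nonneg h2 h3
      rw [hsplit t]
      nlinarith
    have hgle : ∀ t ∈ Set.Ioc 0 t₀, g t ≤ g t₀ :=
      mono_aux g (fun t => -2 / (t * ψ t ^ 2) + (α + ε / 2) * t⁻¹) δ t₀ ht₀δ hg hgpos
    rw [tendsto_zero_iff_norm_tendsto_zero]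
    have hbd : ∀ᶠ t in nhdsWithin 0 (Set.Ioi 0),
        ‖a₂ t * ((t ^ (α + ε) : ℝ) : ℂ)‖ ≤ Real.exp (g t₀) * t ^ (ε / 2) := by
      filter_upwards [Ioo_mem_nhdsGT_of_mem ⟨le_refl (0:ℝ), ht₀u.1⟩] with t ht
      have htδ : t ∈ Set.Ioo (0:ℝ) δ := (hsubset t ht).2
      have hpos : 0 < ‖a₂ t‖ := norm_pos_iff.mpr (hne t htδ)
      have hnorm : ‖a₂ t * ((t ^ (α + ε) : ℝ) : ℂ)‖ = ‖a₂ t‖ * t ^ (α + ε) := by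
        rw [norm_mul, Complex.norm_real, Real.norm_eq_abs,
          abs_of_nonneg (Real.rpow_nonneg ht.1.le _)]
      rw [hnorm]
      have h1 : ‖a₂ t‖ * t ^ (α + ε) = Real.exp (g t + (ε / 2) * Real.log t) := by
        have he : g t + (ε / 2) * Real.log t = Real.log (‖a₂ t‖ * t ^ (α + ε)) := by
          rw [Real.log_mul (ne_of_gt hpos)
            (ne_of_gt (Real.rpow_pos_of_pos ht.1 _)), Real.log_rpow ht.1]
          simp only [hgdef]; ring
        rw [he, Real.exp_log (mul_pos hpos (Real.rpow_pos_of_pos ht.1 _))]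
      have h2 : Real.exp (g t₀) * t ^ (ε / 2) = Real.exp (g t₀ + (ε / 2) * Real.log t) := by
        rw [Real.rpow_def_of_pos ht.1, ← Real.exp_add]
        ring_nf
      rw [h1, h2, Real.exp_le_exp]
      exact add_le_add_left (hgle t ⟨ht.1, ht.2.le⟩) _
    have hlim : Tendsto (fun t : ℝ => Real.exp (g t₀) * t ^ (ε / 2))
        (nhdsWithin 0 (Set.Ioi 0)) (nhds 0) := by
      have h0 : Tendsto (fun t : ℝ => t ^ (ε / 2)) (nhdsWithin 0 (Set.Ioi 0)) (nhds 0) := by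
        have hlog : Tendsto (fun t : ℝ => (ε / 2) * Real.log t)
            (nhdsWithin 0 (Set.Ioi 0)) atBot :=
          (Real.tendsto_log_nhdsGT_zero).const_mul_atBot (by linarith)
        have hexp := Real.tendsto_exp_atBot.comp hlog
        apply hexp.congr'
        filter_upwards [self_mem_nhdsWithin] with t ht
        rw [Set.mem_Ioi] at ht
        simp [Function.comp, Real.rpow_def_of_pos ht]
        ring_nf
      simpa using h0.const_mul (Real.exp (g t₀))
    exact squeeze_zero' (by filter_upwards with t; positivity) hbd hlim
  · -- second limit
    set h : ℝ → ℝ := fun s => Real.log ‖a₂ s‖ + (α - ε / 2) * Real.log s with hhdef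
    have hh : ∀ t ∈ Set.Ioo (0:ℝ) δ,
        HasDerivAt (fun s => -h s) (-(-2 / (t * ψ t ^ 2) + (α - ε / 2) * t⁻¹)) t := by
      intro t ht
      exact ((hL t ht).add ((Real.hasDerivAt_log (ne_of_gt ht.1)).const_mul (α - ε / 2))).neg
    have hhpos : ∀ t ∈ Set.Ioo (0:ℝ) t₀,
        0 ≤ -(-2 / (t * ψ t ^ 2) + (α - ε / 2) * t⁻¹) := by
      intro t ht
      obtain ⟨habs, htδ⟩ := hsubset t ht
      have h1 := abs_lt.mp habs
      have h2 : 0 ≤ (2 / ψ t ^ 2 - (α - ε / 2)) := by linarith [h1.1]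
      have h3 : 0 ≤ t⁻¹ := inv_nonneg.mpr ht.1.le
      have := mul_nonneg h2 h3
      rw [hsplit t]
      nlinarith
    have hhle : ∀ t ∈ Set.Ioc 0 t₀, h t₀ ≤ h t := by
      intro t ht
      have := mono_aux (fun s => -h s)
        (fun t => -(-2 / (t * ψ t ^ 2) + (α - ε / 2) * t⁻¹)) δ t₀ ht₀δ hh hhpos t ht
      beta_reduce at this
      linarith
    have hbd : ∀ᶠ t in nhdsWithin 0 (Set.Ioi 0),
        Real.exp (h t₀ - (ε / 2) * Real.log t) ≤ ‖a₂ t‖ * t ^ (α - ε) := by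
      filter_upwards [Ioo_mem_nhdsGT_of_mem ⟨le_refl (0:ℝ), ht₀u.1⟩] with t ht
      have htδ : t ∈ Set.Ioo (0:ℝ) δ := (hsubset t ht).2
      have hpos : 0 < ‖a₂ t‖ := norm_pos_iff.mpr (hne t htδ)
      have h1 : ‖a₂ t‖ * t ^ (α - ε) = Real.exp (h t - (ε / 2) * Real.log t) := by
        have he : h t - (ε / 2) * Real.log t = Real.log (‖a₂ t‖ * t ^ (α - ε)) := by
          rw [Real.log_mul (ne_of_gt hpos)
            (ne_of_gt (Real.rpow_pos_of_pos ht.1 _)), Real.log_rpow ht.1]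
          simp only [hhdef]; ring
        rw [he, Real.exp_log (mul_pos hpos (Real.rpow_pos_of_pos ht.1 _))]
      rw [h1, Real.exp_le_exp]
      exact sub_le_sub_right (hhle t ⟨ht.1, ht.2.le⟩) _
    have hlim : Tendsto (fun t : ℝ => Real.exp (h t₀ - (ε / 2) * Real.log t))
        (nhdsWithin 0 (Set.Ioi 0)) atTop := by
      apply Real.tendsto_exp_atTop.comp
      have hlog : Tendsto (fun t : ℝ => -((ε / 2) * Real.log t))
          (nhdsWithin 0 (Set.Ioi 0)) atTop := by
        have := (Real.tendsto_log_nhdsGT_zero).const_mul_atBot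
          (show (0:ℝ) < ε / 2 by linarith)
        exact tendsto_neg_atBot_atTop.comp this
      exact (tendsto_atTop_add_const_left _ (h t₀) hlog).congr (fun t => by ring)
    exact tendsto_atTop_mono' _ hbd hlim
end
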